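/- Let φ(t) = (t^n, y(t)) be a primitive prepared Puiseux parametrization of a branch Γ: 2 ≤ n < m where m = ord_t y(t), n does not divide m, and gcd({n} ∪ {i : coefficient of t^i in y(t) is nonzero}) = 1. Let j > m and suppose j belongs to the semigroup S_Γ, i.e. there exists g ∈ ℂ[[x,y]] with ord_t g(t^n, y(t)) = j. Then there exists a singular vector field with vanishing linear part realizing j as its contact exponent with Γ: concretely, there exist A, B ∈ m² ⊂ ℂ[[x,y]] such that ord_t( A(t^n,y(t))·y'(t) − B(t^n,y(t))·n·t^{n−1} ) + 1 = j + n, i.e. υ_Γ(ω_X) = j + n for X = A ∂/∂x + B ∂/∂y. -/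

import Mathlib

/-!
STATEMENT 12: any element `j > m` of the semigroup of a prepared branch
`Γ ≡ (t^n, y(t))` is realized as the contact exponent of a singular vector
field with vanishing linear part: there are `A, B ∈ m²` with
`ord_t(A(φ(t))·y'(t) − B(φ(t))·n·t^{n−1}) + 1 = j + n`.
-/

open PowerSeries

/-- Substitution of `(x(t), y(t))` (both with zero constant term) into a
two-variable formal power series. -/
noncomputable def substPS (xt yt : PowerSeries ℂ) (f : MvPowerSeries (Fin 2) ℂ) :
    PowerSeries ℂ :=
  PowerSeries.mk fun k =>
    ∑ ij ∈ Finset.range (k + 1) ×ˢ Finset.range (k + 1),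
      MvPowerSeries.coeff (Finsupp.single 0 ij.1 + Finsupp.single 1 ij.2) f *
        PowerSeries.coeff k (xt ^ ij.1 * yt ^ ij.2)

/-- The maximal ideal of `ℂ[[x,y]]`: series with zero constant term. -/
noncomputable def mIdeal : Ideal (MvPowerSeries (Fin 2) ℂ) :=
  RingHom.ker (MvPowerSeries.constantCoeff : MvPowerSeries (Fin 2) ℂ →+* ℂ)

lemma my_order_neg (f : PowerSeries ℂ) : PowerSeries.order (-f) = f.order := by
  rcases eq_or_ne f 0 with rfl | h
  · simp
  · have : -f = PowerSeries.C (-1) * f := by ring_nf; simp [map_neg]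
    rw [this, PowerSeries.order_mul, ← PowerSeries.monomial_zero_eq_C_apply,
      PowerSeries.order_monomial_of_ne_zero 0 (-1 : ℂ) (by norm_num)]
    simp

lemma mem_mIdeal_sq (f : MvPowerSeries (Fin 2) ℂ)
    (h0 : MvPowerSeries.coeff 0 f = 0)
    (h1 : MvPowerSeries.coeff (Finsupp.single 0 1) f = 0)
    (h2 : MvPowerSeries.coeff (Finsupp.single 1 1) f = 0) :
    f ∈ mIdeal ^ 2 := by
  classical
  set u : MvPowerSeries (Fin 2) ℂ :=
    fun d => MvPowerSeries.coeff (d + Finsupp.single 0 1) f with hu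
  set v : MvPowerSeries (Fin 2) ℂ :=
    (fun d => if d 0 = 0 then MvPowerSeries.coeff (d + Finsupp.single 1 1) f else 0) with hv
  have hsub0 : ∀ e : Fin 2 →₀ ℕ, ((e - Finsupp.single (1 : Fin 2) 1 : Fin 2 →₀ ℕ)) 0 = e 0 := by
    intro e
    rw [Finsupp.tsub_apply, Finsupp.single_apply]
    simp
  have hXu : ∀ e : Fin 2 →₀ ℕ, MvPowerSeries.coeff e (MvPowerSeries.X 0 * u) =
      if Finsupp.single (0 : Fin 2) 1 ≤ e then MvPowerSeries.coeff e f else 0 := by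
    intro e
    rw [show (MvPowerSeries.X 0 : MvPowerSeries (Fin 2) ℂ)
        = MvPowerSeries.monomial (Finsupp.single 0 1) 1 from rfl,
      MvPowerSeries.coeff_monomial_mul]
    split_ifs with h
    · rw [one_mul, MvPowerSeries.coeff_apply, hu]
      simp [tsub_add_cancel_of_le h]
    · rfl
  have hXv : ∀ e : Fin 2 →₀ ℕ, MvPowerSeries.coeff e (MvPowerSeries.X 1 * v) =
      if Finsupp.single (1 : Fin 2) 1 ≤ e then
        (if e 0 = 0 then MvPowerSeries.coeff e f else 0) else 0 := by
    intro e
    rw [show (MvPowerSeries.X 1 : MvPowerSeries (Fin 2) ℂ)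
        = MvPowerSeries.monomial (Finsupp.single 1 1) 1 from rfl,
      MvPowerSeries.coeff_monomial_mul]
    split_ifs with h h'
    · rw [one_mul, MvPowerSeries.coeff_apply, hv]
      simp only [hsub0 e, h', if_true]
      rw [tsub_add_cancel_of_le h]
    · rw [one_mul, MvPowerSeries.coeff_apply, hv]
      simp only [hsub0 e, h', if_false]
    · rfl
  have hdecomp : f = MvPowerSeries.X 0 * u + MvPowerSeries.X 1 * v := by
    ext e
    rw [map_add, hXu, hXv]
    by_cases he0 : 1 ≤ e 0
    · rw [if_pos (Finsupp.single_le_iff.mpr he0)]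
      have h2' : ¬ (e 0 = 0) := by omega
      split_ifs <;> simp_all
    · rw [if_neg (by simpa using he0)]
      have he0' : e 0 = 0 := by omega
      by_cases he1 : 1 ≤ e 1
      · rw [if_pos (Finsupp.single_le_iff.mpr he1), if_pos he0']
        ring
      · rw [if_neg (by simpa using he1)]
        have : e = 0 := by
          ext i
          fin_cases i <;> simp <;> omega
        rw [this, h0, zero_add]
  rw [hdecomp, sq]
  have hmem : ∀ w : MvPowerSeries (Fin 2) ℂ,
      MvPowerSeries.constantCoeff w = 0 → w ∈ mIdeal := fun w hw =>
    RingHom.mem_ker.mpr hw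
  apply Ideal.add_mem
  · exact Ideal.mul_mem_mul (hmem _ (by simp)) (hmem _ (by
      rw [← MvPowerSeries.coeff_zero_eq_constantCoeff, MvPowerSeries.coeff_apply, hu]
      simpa using h1))
  · exact Ideal.mul_mem_mul (hmem _ (by simp)) (hmem _ (by
      rw [← MvPowerSeries.coeff_zero_eq_constantCoeff, MvPowerSeries.coeff_apply, hv]
      simpa using h2))

lemma substPS_zero (xt yt : PowerSeries ℂ) : substPS xt yt 0 = 0 := by
  ext k
  simp [substPS]

theorem semigroup_element_realized_by_vanishing_linear_part
    (n m : ℕ) (hn : 2 ≤ n) (hnm : n < m) (hnd : ¬ n ∣ m)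
    (y : PowerSeries ℂ)
    (hlow : ∀ i < m, PowerSeries.coeff i y = 0)
    (hm : PowerSeries.coeff m y ≠ 0)
    (hprim : ∀ d : ℕ, d ∣ n → (∀ i, PowerSeries.coeff i y ≠ 0 → d ∣ i) → d = 1)
    (j : ℕ) (hj : m < j)
    (hjS : ∃ g : MvPowerSeries (Fin 2) ℂ,
      substPS (PowerSeries.X ^ n) y g ≠ 0 ∧
      PowerSeries.order (substPS (PowerSeries.X ^ n) y g) = (j : ℕ∞)) :
    ∃ A B : MvPowerSeries (Fin 2) ℂ,
      A ∈ mIdeal ^ 2 ∧ B ∈ mIdeal ^ 2 ∧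
      PowerSeries.order
          (substPS (PowerSeries.X ^ n) y A * PowerSeries.derivativeFun y -
            substPS (PowerSeries.X ^ n) y B *
              (PowerSeries.C (n : ℂ) * PowerSeries.X ^ (n - 1))) + 1
        = ((j + n : ℕ) : ℕ∞) := by
  classical
  obtain ⟨g, hg0, hgord⟩ := hjS
  have hordy : PowerSeries.order y = (m : ℕ∞) := PowerSeries.order_eq_nat.mpr ⟨hm, hlow⟩
  -- coefficients of powers of y below b*m vanish
  have hybord : ∀ b : ℕ, ((b * m : ℕ) : ℕ∞) ≤ PowerSeries.order (y ^ b) := by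
    intro b
    induction b with
    | zero => simp
    | succ b ih =>
      calc (((b + 1) * m : ℕ) : ℕ∞) = ((b * m : ℕ) : ℕ∞) + (m : ℕ∞) := by
            push_cast; ring
        _ ≤ PowerSeries.order (y ^ b) + PowerSeries.order y := by
            rw [hordy]; exact add_le_add_left ih _
        _ ≤ PowerSeries.order (y ^ b * y) := PowerSeries.le_order_mul _ _
        _ = PowerSeries.order (y ^ (b + 1)) := by rw [pow_succ]
  have hyb : ∀ b r : ℕ, r < b * m → PowerSeries.coeff r (y ^ b) = 0 := by
    intro b r hr
    exact PowerSeries.coeff_of_lt_order r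
      (lt_of_lt_of_le (by exact_mod_cast hr) (hybord b))
  -- coefficient of substituted monomials
  have hterm : ∀ a b k : ℕ, PowerSeries.coeff k ((PowerSeries.X ^ n) ^ a * y ^ b) =
      if n * a ≤ k then PowerSeries.coeff (k - n * a) (y ^ b) else 0 := by
    intro a b k
    rw [← pow_mul, PowerSeries.coeff_X_pow_mul']
  have hFk : ∀ k : ℕ, PowerSeries.coeff k (substPS (PowerSeries.X ^ n) y g) =
      ∑ ij ∈ Finset.range (k + 1) ×ˢ Finset.range (k + 1),
        MvPowerSeries.coeff (Finsupp.single 0 ij.1 + Finsupp.single 1 ij.2) g *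
          PowerSeries.coeff k ((PowerSeries.X ^ n) ^ ij.1 * y ^ ij.2) := by
    intro k
    simp [substPS]
  have hcoeffzero : ∀ k : ℕ, k < j →
      PowerSeries.coeff k (substPS (PowerSeries.X ^ n) y g) = 0 := by
    intro k hk
    exact PowerSeries.coeff_of_lt_order k (by rw [hgord]; exact_mod_cast hk)
  -- constant coefficient of g vanishes
  have h0 : MvPowerSeries.coeff 0 g = 0 := by
    have := hcoeffzero 0 (by omega)
    rw [hFk 0] at this
    simpa using this
  -- coefficient of x in g vanishes
  have h1 : MvPowerSeries.coeff (Finsupp.single 0 1) g = 0 := by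
    have hz := hcoeffzero n (by omega)
    rw [hFk n] at hz
    rw [Finset.sum_eq_single_of_mem ((1, 0) : ℕ × ℕ)
      (by simp [Finset.mem_product]; omega) ?_] at hz
    · simpa using hz
    · rintro ⟨a, b⟩ hab hne
      have : PowerSeries.coeff n ((PowerSeries.X ^ n) ^ a * y ^ b) = 0 := by
        rw [hterm]
        split_ifs with h
        · match b with
          | 0 =>
            have ha1 : a ≠ 1 := by
              intro h'; apply hne; simp [h']
            rw [pow_zero, PowerSeries.coeff_one, if_neg]
            intro h''
            have : n * a = n := by omega
            have : a = 1 := by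
              rcases Nat.eq_zero_or_pos a with rfl | hp
              · omega
              · nlinarith
            exact ha1 this
          | (b + 1) =>
            apply hyb
            have : 1 * m ≤ (b + 1) * m := Nat.mul_le_mul_right m (by omega)
            omega
        · rfl
      rw [this, mul_zero]
  -- coefficient of y in g vanishes
  have h2 : MvPowerSeries.coeff (Finsupp.single 1 1) g = 0 := by
    have hz := hcoeffzero m (by omega)
    rw [hFk m] at hz
    rw [Finset.sum_eq_single_of_mem ((0, 1) : ℕ × ℕ)
      (by simp [Finset.mem_product]; omega) ?_] at hz
    · simp only [Finsupp.single_zero, zero_add, pow_zero, pow_one, one_mul] at hz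
      exact (mul_eq_zero.mp hz).resolve_right hm
    · rintro ⟨a, b⟩ hab hne
      have : PowerSeries.coeff m ((PowerSeries.X ^ n) ^ a * y ^ b) = 0 := by
        rw [hterm]
        split_ifs with h
        · match b with
          | 0 =>
            rw [pow_zero, PowerSeries.coeff_one, if_neg]
            intro h''
            exact hnd ⟨a, by omega⟩
          | 1 =>
            have ha : a ≠ 0 := by
              intro h'; apply hne; simp [h']
            rw [pow_one]
            apply hlow
            have : n * 1 ≤ n * a := Nat.mul_le_mul_left n (by omega)
            omega
          | (b + 2) =>
            apply hyb
            have : 2 * m ≤ (b + 2) * m := Nat.mul_le_mul_right m (by omega)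
            omega
        · rfl
      rw [this, mul_zero]
  refine ⟨0, g, Ideal.zero_mem _, mem_mIdeal_sq g h0 h1 h2, ?_⟩
  rw [substPS_zero, zero_mul, zero_sub, my_order_neg, PowerSeries.order_mul, hgord,
    PowerSeries.order_mul, ← PowerSeries.monomial_zero_eq_C_apply,
    PowerSeries.order_monomial_of_ne_zero 0 ((n : ℂ)) (by
      exact_mod_cast Nat.cast_ne_zero.mpr (by omega)),
    PowerSeries.order_X_pow]
  rw [show j + n = j + (n - 1) + 1 from by omega]
  push_cast
  rw [zero_add]
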